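/- Let p be an odd prime. For every ρ-invariant monomial m of R and every monomial order on R, the polynomial m + σ(m) reduces to zero modulo the set 𝒢. -/

import Mathlib

open MvPolynomial

noncomputable section

abbrev DVar (r s : ℕ) := (Fin r ⊕ Fin r) ⊕ (Fin s ⊕ Fin s)

def dswap {r s : ℕ} : DVar r s → DVar r s
  | .inl (.inl i) => .inl (.inr i)
  | .inl (.inr i) => .inl (.inl i)
  | .inr (.inl j) => .inr (.inr j)
  | .inr (.inr j) => .inr (.inl j)

def sigmaMap (F : Type*) [Field F] (r s : ℕ) :
    MvPolynomial (DVar r s) F →ₐ[F] MvPolynomial (DVar r s) F :=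
  MvPolynomial.rename dswap

def rhoCoeff {F : Type*} [Field F] {r s : ℕ} (lam : Fin r → F) : DVar r s → F
  | .inl (.inl i) => lam i
  | .inl (.inr i) => (lam i)⁻¹
  | .inr _ => 1

def rhoMap (F : Type*) [Field F] (r s : ℕ) (lam : Fin r → F) :
    MvPolynomial (DVar r s) F →ₐ[F] MvPolynomial (DVar r s) F :=
  MvPolynomial.aeval fun v => MvPolynomial.C (rhoCoeff lam v) * MvPolynomial.X v

def HilbertIdeal (F : Type*) [Field F] (r s : ℕ) (lam : Fin r → F) :
    Ideal (MvPolynomial (DVar r s) F) :=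
  Ideal.span {f | sigmaMap F r s f = f ∧ rhoMap F r s lam f = f ∧ constantCoeff f = 0}

def IsMonomial {σ F : Type*} [CommSemiring F] (f : MvPolynomial σ F) : Prop :=
  ∃ d : σ →₀ ℕ, f = monomial d 1

def GSet (F : Type*) [Field F] (r s p : ℕ) (lam : Fin r → F) :
    Set (MvPolynomial (DVar r s) F) :=
  {f | ∃ m, IsMonomial m ∧ rhoMap F r s lam m = m ∧ sigmaMap F r s m ≠ m ∧
      m.totalDegree ≤ p ∧ f = m + sigmaMap F r s m} ∪
  {f | ∃ (m : MvPolynomial (DVar r s) F) (v : DVar r s), IsMonomial m ∧ rhoMap F r s lam m = m ∧ m.totalDegree ≤ p ∧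
      X v ∣ m ∧ f = X v * m} ∪
  {f | (∃ i : Fin r, f = X (Sum.inl (Sum.inl i)) * X (Sum.inl (Sum.inr i))) ∨
       (∃ j : Fin s, f = X (Sum.inr (Sum.inl j)) * X (Sum.inr (Sum.inr j)))}

def lmExp {σ F : Type*} [CommSemiring F] (mo : MonomialOrder σ) (f : MvPolynomial σ F) :
    σ →₀ ℕ :=
  mo.toSyn.symm (f.support.sup fun d => mo.toSyn d)

/-- `f` reduces to zero modulo `G` with respect to the monomial order `mo`. -/
def ReducesToZero {σ F : Type*} [CommSemiring F] (mo : MonomialOrder σ)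
    (G : Set (MvPolynomial σ F)) (f : MvPolynomial σ F) : Prop :=
  ∃ (n : ℕ) (a g : Fin n → MvPolynomial σ F),
    (∀ i, g i ∈ G) ∧ f = ∑ i, a i * g i ∧
    ∀ i, a i * g i ≠ 0 → mo.toSyn (lmExp mo (a i * g i)) ≤ mo.toSyn (lmExp mo f)

namespace OrbitAux

/-! ### Generic `lmExp` and `ReducesToZero` lemmas -/

section Generic

variable {σ F : Type*} [CommSemiring F] (mo : MonomialOrder σ)

lemma toSyn_lmExp (f : MvPolynomial σ F) :
    mo.toSyn (lmExp mo f) = f.support.sup fun x => mo.toSyn x :=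
  mo.toSyn.apply_symm_apply _

lemma toSyn_lmExp_le {f : MvPolynomial σ F} {M : mo.syn}
    (h : ∀ x ∈ f.support, mo.toSyn x ≤ M) : mo.toSyn (lmExp mo f) ≤ M := by
  rw [toSyn_lmExp]; exact Finset.sup_le h

lemma le_toSyn_lmExp {f : MvPolynomial σ F} {x : σ →₀ ℕ} (hx : x ∈ f.support) :
    mo.toSyn x ≤ mo.toSyn (lmExp mo f) := by
  rw [toSyn_lmExp]; exact Finset.le_sup hx

lemma lmExp_mem_support {f : MvPolynomial σ F} (hf : f ≠ 0) : lmExp mo f ∈ f.support := by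
  obtain ⟨x, hx, hsup⟩ := Finset.exists_mem_eq_sup f.support
    (MvPolynomial.support_nonempty.mpr hf) (fun x => mo.toSyn x)
  rw [lmExp, hsup, AddEquiv.symm_apply_apply]
  exact hx

lemma rz_zero (G : Set (MvPolynomial σ F)) : ReducesToZero mo G 0 :=
  ⟨0, Fin.elim0, Fin.elim0, fun i => i.elim0, by simp, fun i => i.elim0⟩

lemma rz_congr {G : Set (MvPolynomial σ F)} {f g : MvPolynomial σ F} (h : f = g)
    (hf : ReducesToZero mo G f) : ReducesToZero mo G g := h ▸ hf

lemma rz_mem {G : Set (MvPolynomial σ F)} {f : MvPolynomial σ F} (hf : f ∈ G) :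
    ReducesToZero mo G f := by
  refine ⟨1, fun _ => 1, fun _ => f, fun _ => hf, by simp, fun i _ => ?_⟩
  rw [one_mul]

lemma rz_add {G : Set (MvPolynomial σ F)} {f₁ f₂ : MvPolynomial σ F}
    (h₁ : ReducesToZero mo G f₁) (h₂ : ReducesToZero mo G f₂)
    (b₁ : mo.toSyn (lmExp mo f₁) ≤ mo.toSyn (lmExp mo (f₁ + f₂)))
    (b₂ : mo.toSyn (lmExp mo f₂) ≤ mo.toSyn (lmExp mo (f₁ + f₂))) :
    ReducesToZero mo G (f₁ + f₂) := by
  obtain ⟨n₁, a₁, g₁, hg₁, he₁, hb₁⟩ := h₁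
  obtain ⟨n₂, a₂, g₂, hg₂, he₂, hb₂⟩ := h₂
  refine ⟨n₁ + n₂, Fin.append a₁ a₂, Fin.append g₁ g₂, ?_, ?_, ?_⟩
  · intro i
    induction i using Fin.addCases with
    | left i => rw [Fin.append_left]; exact hg₁ i
    | right i => rw [Fin.append_right]; exact hg₂ i
  · rw [Fin.sum_univ_add]
    simp only [Fin.append_left, Fin.append_right]
    rw [← he₁, ← he₂]
  · intro i
    induction i using Fin.addCases with
    | left i =>
      simp only [Fin.append_left]
      intro hne
      exact le_trans (hb₁ i hne) b₁
    | right i =>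
      simp only [Fin.append_right]
      intro hne
      exact le_trans (hb₂ i hne) b₂

end Generic

section GenericField

variable {σ F : Type*} [Field F] (mo : MonomialOrder σ)

lemma toSyn_lmExp_monomial_mul {f : MvPolynomial σ F} (hf : f ≠ 0) (e : σ →₀ ℕ) :
    mo.toSyn (lmExp mo (monomial e (1 : F) * f)) = mo.toSyn e + mo.toSyn (lmExp mo f) := by
  classical
  apply le_antisymm
  · apply toSyn_lmExp_le
    intro x hx
    have hx' := MvPolynomial.support_mul _ _ hx
    rw [MvPolynomial.support_monomial, if_neg (one_ne_zero)] at hx'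
    rw [Finset.mem_add] at hx'
    obtain ⟨a, ha, b, hb, rfl⟩ := hx'
    rw [Finset.mem_singleton] at ha
    subst ha
    rw [map_add]
    exact add_le_add le_rfl (le_toSyn_lmExp mo hb)
  · have hmem : e + lmExp mo f ∈ (monomial e (1 : F) * f).support := by
      rw [MvPolynomial.mem_support_iff, MvPolynomial.coeff_monomial_mul, one_mul,
        ← MvPolynomial.mem_support_iff]
      exact lmExp_mem_support mo hf
    have := le_toSyn_lmExp mo hmem
    rwa [map_add] at this

lemma rz_monomial_mul {G : Set (MvPolynomial σ F)} {f : MvPolynomial σ F}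
    (h : ReducesToZero mo G f) (e : σ →₀ ℕ) :
    ReducesToZero mo G (monomial e (1 : F) * f) := by
  by_cases hf : f = 0
  · rw [hf, mul_zero]; exact rz_zero mo G
  obtain ⟨n, a, g, hg, he, hb⟩ := h
  refine ⟨n, fun i => monomial e 1 * a i, g, hg, ?_, ?_⟩
  · rw [he, Finset.mul_sum]
    exact Finset.sum_congr rfl fun i _ => (mul_assoc _ _ _).symm
  · intro i hi
    rw [mul_assoc] at hi ⊢
    have hag : a i * g i ≠ 0 := fun h0 => hi (by rw [h0, mul_zero])
    rw [toSyn_lmExp_monomial_mul mo hag, toSyn_lmExp_monomial_mul mo hf]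
    exact add_le_add le_rfl (hb i hag)

lemma toSyn_lmExp_binom_le {d e : σ →₀ ℕ} {c c' : F} {M : mo.syn}
    (hd : mo.toSyn d ≤ M) (he : mo.toSyn e ≤ M) :
    mo.toSyn (lmExp mo (monomial d c + monomial e c')) ≤ M := by
  classical
  apply toSyn_lmExp_le
  intro x hx
  have hx' := MvPolynomial.support_add hx
  rw [Finset.mem_union] at hx'
  rcases hx' with hx' | hx'
  · rw [MvPolynomial.support_monomial] at hx'
    split at hx'
    · exact absurd hx' (Finset.notMem_empty x)
    · rw [Finset.mem_singleton] at hx'; subst hx'; exact hd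
  · rw [MvPolynomial.support_monomial] at hx'
    split at hx'
    · exact absurd hx' (Finset.notMem_empty x)
    · rw [Finset.mem_singleton] at hx'; subst hx'; exact he

lemma mem_support_binom_left {d e : σ →₀ ℕ} (hne : d ≠ e) :
    d ∈ (monomial d (1 : F) + monomial e 1).support := by
  classical
  rw [MvPolynomial.mem_support_iff, MvPolynomial.coeff_add, MvPolynomial.coeff_monomial,
    if_pos rfl, MvPolynomial.coeff_monomial, if_neg (fun h => hne h.symm), add_zero]
  exact one_ne_zero

lemma mem_support_binom_right {d e : σ →₀ ℕ} (hne : d ≠ e) :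
    e ∈ (monomial d (1 : F) + monomial e 1).support := by
  rw [add_comm]
  exact mem_support_binom_left (Ne.symm hne)

end GenericField

/-! ### Weights and the swap on exponents -/

section Dihedral

variable {F : Type*} [Field F] {r s : ℕ}

lemma dswap_invol : ∀ v : DVar r s, dswap (dswap v) = v := by
  rintro ((i | i) | (j | j)) <;> rfl

/-- swap on exponents -/
def eSw {r s : ℕ} (d : DVar r s →₀ ℕ) : DVar r s →₀ ℕ := Finsupp.mapDomain dswap d

lemma eSw_eSw (d : DVar r s →₀ ℕ) : eSw (eSw d) = d := by
  rw [eSw, eSw, ← Finsupp.mapDomain_comp]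
  have h : (dswap ∘ dswap : DVar r s → DVar r s) = id := funext dswap_invol
  rw [h, Finsupp.mapDomain_id]

lemma eSw_add (d e : DVar r s →₀ ℕ) : eSw (d + e) = eSw d + eSw e := Finsupp.mapDomain_add

lemma sigmaMap_monomial (d : DVar r s →₀ ℕ) (c : F) :
    sigmaMap F r s (monomial d c) = monomial (eSw d) c :=
  rename_monomial _ _ _

variable (lam : Fin r → F)

/-- the weight of an exponent vector -/
def wt (d : DVar r s →₀ ℕ) : F := d.prod fun v n => rhoCoeff lam v ^ n

lemma wt_add (d e : DVar r s →₀ ℕ) : wt lam (d + e) = wt lam d * wt lam e :=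
  Finsupp.prod_add_index' (fun _ => pow_zero _) (fun v m n => pow_add _ _ _)

lemma rhoMap_monomial (d : DVar r s →₀ ℕ) (c : F) :
    rhoMap F r s lam (monomial d c) = monomial d (c * wt lam d) := by
  rw [rhoMap, aeval_monomial]
  have h : (d.prod fun v n => (C (rhoCoeff lam v) * X v : MvPolynomial (DVar r s) F) ^ n)
      = C (wt lam d) * d.prod fun v n => (X v : MvPolynomial (DVar r s) F) ^ n := by
    rw [wt, Finsupp.prod, Finsupp.prod, Finsupp.prod, map_prod, ← Finset.prod_mul_distrib]
    exact Finset.prod_congr rfl fun v _ => by rw [mul_pow, map_pow]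
  rw [h, MvPolynomial.algebraMap_eq, ← mul_assoc, ← map_mul, ← MvPolynomial.monomial_eq]

lemma rho_fixes_iff (d : DVar r s →₀ ℕ) :
    rhoMap F r s lam (monomial d (1 : F)) = monomial d 1 ↔ wt lam d = 1 := by
  rw [rhoMap_monomial, MvPolynomial.monomial_eq_monomial_iff, one_mul]
  simp

/-- total degree of an exponent vector -/
def deg {r s : ℕ} (d : DVar r s →₀ ℕ) : ℕ := d.sum fun _ n => n

lemma deg_add (d e : DVar r s →₀ ℕ) : deg (d + e) = deg d + deg e :=
  Finsupp.sum_add_index' (fun _ => rfl) (fun _ _ _ => rfl)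

lemma wt_eq_prod (d : DVar r s →₀ ℕ) :
    wt lam d = ((Finsupp.toMultiset d).map (rhoCoeff lam)).prod := by
  rw [Finsupp.toMultiset_map, Finsupp.prod_toMultiset,
    Finsupp.prod_mapDomain_index (fun _ => pow_zero _) (fun b m n => pow_add _ _ _)]
  rfl

/-! ### The pigeonhole lemma -/

variable {p : ℕ}

lemma exists_sub (hp : 0 < p) (hroots : ∀ v : DVar r s, rhoCoeff lam v ^ p = 1)
    (d : DVar r s →₀ ℕ) (hd : p ≤ deg d) :
    ∃ d₁ : DVar r s →₀ ℕ, d₁ ≤ d ∧ 0 < deg d₁ ∧ deg d₁ ≤ p ∧ wt lam d₁ = 1 := by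
  classical
  set l := (Finsupp.toMultiset d).toList with hl
  have hlen : l.length = deg d := by
    rw [hl, Multiset.length_toList, Finsupp.card_toMultiset]; rfl
  have hlm : (↑l : Multiset (DVar r s)) = Finsupp.toMultiset d := by
    rw [hl, Multiset.coe_toList]
  set c : DVar r s → F := rhoCoeff lam with hc
  set f : Fin (p + 1) → F := fun k => ((l.take k).map c).prod with hf
  have hfmem : ∀ k : Fin (p + 1), f k ∈ (Polynomial.nthRoots p (1 : F)).toFinset := by
    intro k
    rw [Multiset.mem_toFinset, Polynomial.mem_nthRoots hp]
    rw [hf]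
    have h1 : (((l.take k).map c).map (powMonoidHom p : F →* F)).prod
        = ((l.take k).map c).prod ^ p := List.prod_hom _ (powMonoidHom p)
    rw [← h1, List.map_map]
    apply List.prod_eq_one
    intro x hx
    rw [List.mem_map] at hx
    obtain ⟨v, hv, rfl⟩ := hx
    exact hroots v
  have hcard : (Polynomial.nthRoots p (1 : F)).toFinset.card < Fintype.card (Fin (p + 1)) := by
    rw [Fintype.card_fin]
    exact lt_of_le_of_lt (le_trans (Multiset.toFinset_card_le _) (Polynomial.card_nthRoots p (1 : F)))
      (Nat.lt_succ_self p)
  have := Finset.exists_ne_map_eq_of_card_lt_of_maps_to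
    (by rw [Finset.card_univ]; exact hcard) (fun k _ => hfmem k)
  obtain ⟨i, -, j, -, hij, hfij⟩ := this
  -- wlog i < j
  wlog hlt : (i : ℕ) < (j : ℕ) generalizing i j
  · exact this j i (Ne.symm hij) hfij.symm
      (lt_of_le_of_ne (not_lt.mp hlt) (fun h => hij (Fin.ext h.symm)))
  set sub : List (DVar r s) := (l.drop i).take (j - i) with hsub
  have hsubl : sub.Sublist l := (List.take_sublist _ _).trans (List.drop_sublist _ _)
  have hsublen : sub.length = (j : ℕ) - (i : ℕ) := by
    rw [hsub, List.length_take, List.length_drop, hlen]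
    have hj : (j : ℕ) ≤ deg d := le_trans (Nat.le_of_lt_succ j.isLt) hd
    omega
  refine ⟨Multiset.toFinsupp (↑sub : Multiset (DVar r s)), ?_, ?_, ?_, ?_⟩
  · have hmle : (↑sub : Multiset (DVar r s)) ≤ ↑l := hsubl.subperm
    rw [hlm] at hmle
    have h3 := (Finsupp.orderIsoMultiset (ι := DVar r s)).symm.le_iff_le.mpr hmle
    rw [Finsupp.coe_orderIsoMultiset_symm] at h3
    rwa [Finsupp.toMultiset_toFinsupp] at h3
  · have : deg (Multiset.toFinsupp (↑sub : Multiset (DVar r s)))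
        = sub.length := by
      have h2 : deg (Multiset.toFinsupp (↑sub : Multiset (DVar r s)))
          = Multiset.card (Finsupp.toMultiset (Multiset.toFinsupp (↑sub : Multiset (DVar r s)))) :=
        (Finsupp.card_toMultiset _).symm
      rw [Multiset.toFinsupp_toMultiset, Multiset.coe_card] at h2
      exact h2
    rw [this, hsublen]
    omega
  · have : deg (Multiset.toFinsupp (↑sub : Multiset (DVar r s)))
        = sub.length := by
      have h2 : deg (Multiset.toFinsupp (↑sub : Multiset (DVar r s)))
          = Multiset.card (Finsupp.toMultiset (Multiset.toFinsupp (↑sub : Multiset (DVar r s)))) :=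
        (Finsupp.card_toMultiset _).symm
      rw [Multiset.toFinsupp_toMultiset, Multiset.coe_card] at h2
      exact h2
    rw [this, hsublen]
    omega
  · rw [wt_eq_prod, Multiset.toFinsupp_toMultiset]
    have hsplit : l.take (j : ℕ) = l.take (i : ℕ) ++ sub := by
      rw [hsub, ← List.take_add, Nat.add_sub_cancel' (le_of_lt hlt)]
    have hprod : f j = f i * (sub.map c).prod := by
      rw [hf]
      simp only
      rw [hsplit, List.map_append, List.prod_append]
    have hfi : f i ≠ 0 := by
      intro h0
      have := hfmem i
      rw [Multiset.mem_toFinset, Polynomial.mem_nthRoots hp, h0, zero_pow hp.ne'] at this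
      exact zero_ne_one this
    have : f i * 1 = f i * (sub.map c).prod := by
      rw [mul_one, ← hprod, hfij]
    have := (mul_left_cancel₀ hfi this).symm
    rw [Multiset.map_coe, Multiset.prod_coe]
    exact this

/-! ### The inductive step -/

variable [CharP F 2]

lemma step (mo : MonomialOrder (DVar r s)) (G : Set (MvPolynomial (DVar r s) F))
    (d₁ d₂ : DVar r s →₀ ℕ)
    (h₁ : ReducesToZero mo G (monomial d₁ (1 : F) + monomial (eSw d₁) 1))
    (h₂ : ReducesToZero mo G (monomial d₂ (1 : F) + monomial (eSw d₂) 1))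
    (hor : mo.toSyn d₂ ≤ mo.toSyn (eSw d₂))
    (hne : d₁ + d₂ ≠ eSw d₁ + eSw d₂) :
    ReducesToZero mo G (monomial (d₁ + d₂) (1 : F) + monomial (eSw d₁ + eSw d₂) 1) := by
  have hBB : (monomial (eSw d₁ + d₂) (1 : F) : MvPolynomial (DVar r s) F)
      + monomial (eSw d₁ + d₂) 1 = 0 := CharTwo.add_self_eq_zero _
  have key : monomial (d₁ + d₂) (1 : F) + monomial (eSw d₁ + eSw d₂) 1
      = monomial d₂ 1 * (monomial d₁ 1 + monomial (eSw d₁) 1)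
      + monomial (eSw d₁) 1 * (monomial d₂ 1 + monomial (eSw d₂) 1) := by
    rw [mul_add, mul_add, monomial_mul, monomial_mul, monomial_mul, monomial_mul,
      one_mul, add_comm d₂ d₁, add_comm d₂ (eSw d₁)]
    linear_combination -hBB
  have hmemX : d₁ + d₂ ∈ (monomial (d₁ + d₂) (1 : F) + monomial (eSw d₁ + eSw d₂) 1).support :=
    mem_support_binom_left hne
  have hmemY : eSw d₁ + eSw d₂
      ∈ (monomial (d₁ + d₂) (1 : F) + monomial (eSw d₁ + eSw d₂) 1).support :=
    mem_support_binom_right hne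
  have hXM := le_toSyn_lmExp mo hmemX
  have hYM := le_toSyn_lmExp mo hmemY
  have hBM : mo.toSyn (eSw d₁ + d₂)
      ≤ mo.toSyn (lmExp mo (monomial (d₁ + d₂) (1 : F) + monomial (eSw d₁ + eSw d₂) 1)) := by
    calc mo.toSyn (eSw d₁ + d₂) = mo.toSyn (eSw d₁) + mo.toSyn d₂ := map_add _ _ _
    _ ≤ mo.toSyn (eSw d₁) + mo.toSyn (eSw d₂) := add_le_add le_rfl hor
    _ = mo.toSyn (eSw d₁ + eSw d₂) := (map_add _ _ _).symm
    _ ≤ _ := hYM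
  rw [key]
  refine rz_add mo (rz_monomial_mul mo h₁ d₂) (rz_monomial_mul mo h₂ (eSw d₁)) ?_ ?_
  · rw [← key]
    have hexp : monomial d₂ (1 : F) * (monomial d₁ 1 + monomial (eSw d₁) 1)
        = monomial (d₂ + d₁) 1 + monomial (d₂ + eSw d₁) 1 := by
      rw [mul_add, monomial_mul, monomial_mul, one_mul]
    rw [hexp, add_comm d₂ d₁, add_comm d₂ (eSw d₁)]
    exact toSyn_lmExp_binom_le mo hXM hBM
  · rw [← key]
    have hexp : monomial (eSw d₁) (1 : F) * (monomial d₂ 1 + monomial (eSw d₂) 1)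
        = monomial (eSw d₁ + d₂) 1 + monomial (eSw d₁ + eSw d₂) 1 := by
      rw [mul_add, monomial_mul, monomial_mul, one_mul]
    rw [hexp]
    exact toSyn_lmExp_binom_le mo hBM hYM

/-! ### The main induction -/

lemma key_lemma (hp : 0 < p) (hroots : ∀ v : DVar r s, rhoCoeff lam v ^ p = 1)
    (mo : MonomialOrder (DVar r s)) :
    ∀ (n : ℕ) (d : DVar r s →₀ ℕ), deg d ≤ n → wt lam d = 1 →
      ReducesToZero mo (GSet F r s p lam) (monomial d (1 : F) + monomial (eSw d) 1) := by
  intro n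
  induction n using Nat.strong_induction_on with
  | _ n ih =>
    intro d hdn hw
    by_cases hfix : eSw d = d
    · rw [hfix, CharTwo.add_self_eq_zero]
      exact rz_zero mo _
    by_cases hdeg : deg d ≤ p
    · apply rz_mem mo
      apply Set.mem_union_left
      apply Set.mem_union_left
      refine ⟨monomial d 1, ⟨d, rfl⟩, (rho_fixes_iff lam d).2 hw, ?_, ?_, ?_⟩
      · rw [sigmaMap_monomial]
        intro hcon
        rcases (MvPolynomial.monomial_eq_monomial_iff _ _ _ _).1 hcon with ⟨h1, -⟩ | ⟨h1, -⟩
        · exact hfix h1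
        · exact one_ne_zero h1
      · rw [MvPolynomial.totalDegree_monomial _ (one_ne_zero)]
        exact hdeg
      · rw [sigmaMap_monomial]
    · have hp_le : p ≤ deg d := le_of_lt (lt_of_not_ge hdeg)
      obtain ⟨d₁, hle, hpos, hd1p, hw1⟩ := exists_sub lam hp hroots d hp_le
      set d₂ := d - d₁ with hd₂
      have hsum : d₁ + d₂ = d := add_tsub_cancel_of_le hle
      have hw2 : wt lam d₂ = 1 := by
        have h := wt_add lam d₁ d₂
        rw [hsum, hw, hw1, one_mul] at h
        exact h.symm
      have hdegsum : deg d₁ + deg d₂ = deg d := by rw [← deg_add, hsum]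
      have hdeg1 : deg d₁ < deg d := lt_of_le_of_lt hd1p (lt_of_not_ge hdeg)
      have hdeg2 : deg d₂ < deg d := by omega
      have h₁ := ih (deg d₁) (lt_of_lt_of_le hdeg1 hdn) d₁ le_rfl hw1
      have h₂ := ih (deg d₂) (lt_of_lt_of_le hdeg2 hdn) d₂ le_rfl hw2
      have hne : d₁ + d₂ ≠ eSw d₁ + eSw d₂ := by
        rw [hsum, ← eSw_add, hsum]
        exact fun h => hfix h.symm
      rcases le_total (mo.toSyn d₂) (mo.toSyn (eSw d₂)) with hor | hor
      · have hstep := step mo (GSet F r s p lam) d₁ d₂ h₁ h₂ hor hne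
        rw [hsum, ← eSw_add, hsum] at hstep
        exact hstep
      · have h₁' : ReducesToZero mo (GSet F r s p lam)
            (monomial (eSw d₁) (1 : F) + monomial (eSw (eSw d₁)) 1) := by
          rw [eSw_eSw]
          exact rz_congr mo (add_comm _ _) h₁
        have h₂' : ReducesToZero mo (GSet F r s p lam)
            (monomial (eSw d₂) (1 : F) + monomial (eSw (eSw d₂)) 1) := by
          rw [eSw_eSw]
          exact rz_congr mo (add_comm _ _) h₂
        have hor' : mo.toSyn (eSw d₂) ≤ mo.toSyn (eSw (eSw d₂)) := by
          rw [eSw_eSw]; exact hor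
        have hne' : eSw d₁ + eSw d₂ ≠ eSw (eSw d₁) + eSw (eSw d₂) := by
          rw [eSw_eSw, eSw_eSw]
          exact Ne.symm hne
        have hstep := step mo (GSet F r s p lam) (eSw d₁) (eSw d₂) h₁' h₂' hor' hne'
        rw [eSw_eSw, eSw_eSw, hsum, ← eSw_add, hsum] at hstep
        exact rz_congr mo (add_comm _ _) hstep

end Dihedral

end OrbitAux

/-- For `p` an odd prime, every `ρ`-invariant monomial `m` and every monomial
order, the polynomial `m + σ(m)` reduces to zero modulo the set `𝒢`. -/
theorem orbitSum_reducesToZero_GSet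
    {F : Type*} [Field F] [CharP F 2] {r s p : ℕ} (hp : p.Prime) (hodd : Odd p)
    (ζ : F) (hζ : IsPrimitiveRoot ζ p)
    (lam : Fin r → F) (hlam : ∀ i, lam i ^ p = 1 ∧ lam i ≠ 1)
    (mo : MonomialOrder (DVar r s))
    (m : MvPolynomial (DVar r s) F) (hm : IsMonomial m) (hρ : rhoMap F r s lam m = m) :
    ReducesToZero mo (GSet F r s p lam) (m + sigmaMap F r s m) := by
  obtain ⟨d, rfl⟩ := hm
  have hw : OrbitAux.wt lam d = 1 := (OrbitAux.rho_fixes_iff lam d).1 hρ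
  have hroots : ∀ v : DVar r s, rhoCoeff lam v ^ p = 1 := by
    rintro ((i | i) | v)
    · exact (hlam i).1
    · show (lam i)⁻¹ ^ p = 1
      rw [inv_pow, (hlam i).1, inv_one]
    · exact one_pow p
  have h := OrbitAux.key_lemma lam hp.pos hroots mo (OrbitAux.deg d) d le_rfl hw
  rw [OrbitAux.sigmaMap_monomial]
  exact h
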